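/- Let N ≥ 2 and let A = {a₁, …, a_N} be a free basis of F_N. If Φ is an automorphism of F_N such that Φ(u) is conjugate to u in F_N for every element u ∈ F_N whose reduced word over A has length at most 2, then Φ is an inner automorphism of F_N. -/

import Mathlib

set_option linter.unusedSectionVars false

namespace FGInner

open FreeGroup List

variable {α : Type*} [DecidableEq α]

abbrev bar (s : α × Bool) : α × Bool := (s.1, !s.2)

@[simp] lemma bar_bar (s : α × Bool) : bar (bar s) = s := by cases s; simp

def NR (s t : α × Bool) : Prop := s.1 = t.1 → s.2 = t.2

lemma nr_symm {s t : α × Bool} (h : NR s t) : NR t s := fun he => (h he.symm).symm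

lemma nr_iff_right {s t : α × Bool} : NR s t ↔ t ≠ bar s := by
  obtain ⟨a, u⟩ := s; obtain ⟨b, v⟩ := t
  cases u <;> cases v <;> simp [NR, Prod.ext_iff, eq_comm]

lemma nr_iff_left {s t : α × Bool} : NR s t ↔ s ≠ bar t := by
  constructor
  · intro h he
    exact (nr_iff_right.mp (nr_symm h)) he
  · intro h
    exact nr_symm (nr_iff_right.mpr h)

def IsRed (l : List (α × Bool)) : Prop := l.IsChain NR

/-- sandwich word -/
def SW (p r : List (α × Bool)) : List (α × Bool) := p ++ r ++ invRev p

lemma reduce_eq_self {l : List (α × Bool)} (h : IsRed l) : FreeGroup.reduce l = l := by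
  induction l with
  | nil => rfl
  | cons c l ih =>
    have hl : IsRed l := List.IsChain.tail h
    rw [reduce.cons, ih hl]
    cases l with
    | nil => rfl
    | cons d t =>
      have hnr : NR c d := (List.isChain_cons_cons.mp h).1
      have hcond : ¬(c.1 = d.1 ∧ c.2 = !d.2) := by
        rintro ⟨h1, h2⟩
        have := hnr h1
        rw [this] at h2
        simp at h2
      simp only [hcond, if_false]

lemma toWord_mk_isRed {l : List (α × Bool)} (h : IsRed l) : (mk l).toWord = l := by
  rw [toWord_mk, reduce_eq_self h]

lemma invRev_cons (c : α × Bool) (l : List (α × Bool)) :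
    invRev (c :: l) = invRev l ++ [bar c] := by
  simp [invRev]

lemma invRev_singleton (c : α × Bool) : invRev [c] = [bar c] := by simp [invRev]

lemma invRev_replicate (n : ℕ) (c : α × Bool) :
    invRev (List.replicate n c) = List.replicate n (bar c) := by
  simp [invRev, List.map_replicate, List.reverse_replicate]

lemma isRed_invRev {l : List (α × Bool)} (h : IsRed l) : IsRed (invRev l) := by
  unfold IsRed invRev at *
  rw [List.isChain_reverse, List.isChain_map]
  refine h.imp ?_
  intro a b hab he
  have h2 := hab he.symm
  simp [h2]

/- ## group-level helpers -/

lemma of_eq_mk (y : α) : of y = mk [(y, true)] := rfl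

lemma mk_cons (c : α × Bool) (L : List (α × Bool)) : mk (c :: L) = mk [c] * mk L := by
  rw [mul_mk]; rfl

lemma mk_bar (c : α × Bool) : mk [bar c] = (mk [c])⁻¹ := by
  rw [inv_mk, invRev_singleton]

lemma mk_sw (p r : List (α × Bool)) : mk (SW p r) = mk p * mk r * (mk p)⁻¹ := by
  rw [SW, ← mul_mk, ← mul_mk, inv_mk]

/- ## wrap lemma -/

lemma isRed_wrap {M : List (α × Bool)} {c : α × Bool} (hM : IsRed M) (hne : M ≠ [])
    (h1 : ∀ s ∈ M.head?, NR c s) (h2 : ∀ s ∈ M.getLast?, NR s (bar c)) :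
    IsRed (c :: (M ++ [bar c])) := by
  have hMc : IsRed (M ++ [bar c]) := by
    rw [IsRed, List.isChain_append]
    refine ⟨hM, List.isChain_singleton _, ?_⟩
    intro x hx y hy
    simp only [List.head?_cons, Option.mem_some_iff] at hy
    subst hy
    exact h2 x hx
  rw [IsRed, List.isChain_cons]
  refine ⟨?_, hMc⟩
  intro y hy
  rw [List.head?_append] at hy
  cases M with
  | nil => exact absurd rfl hne
  | cons m M' =>
    simp only [List.head?_cons, Option.or_some, Option.mem_some_iff] at hy
    subst hy
    exact h1 m (by simp)

lemma sw_cons_eq (c : α × Bool) (p r : List (α × Bool)) :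
    SW (c :: p) r = c :: (SW p r ++ [bar c]) := by
  simp [SW, invRev_cons]

lemma sw_nil (r : List (α × Bool)) : SW [] r = r := by simp [SW, invRev]

lemma sw_head? (d : α × Bool) (p0 r : List (α × Bool)) :
    (SW (d :: p0) r).head? = some d := by
  simp [SW]

lemma sw_getLast? (d : α × Bool) (p0 r : List (α × Bool)) :
    (SW (d :: p0) r).getLast? = some (bar d) := by
  rw [sw_cons_eq]
  rw [show d :: (SW p0 r ++ [bar d]) = (d :: SW p0 r) ++ [bar d] by simp]
  exact List.getLast?_concat


/- ## step lemma -/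

lemma isRed_sw_cons {p r : List (α × Bool)} (c : α × Bool) (hred : IsRed (SW p r))
    (hd : p ≠ []) (hnr : NR c (p.head hd)) : IsRed (SW (c :: p) r) := by
  cases p with
  | nil => exact absurd rfl hd
  | cons d p0 =>
    rw [sw_cons_eq]
    refine isRed_wrap hred (by rw [SW]; simp) ?_ ?_
    · intro s hs
      rw [sw_head?] at hs
      simp only [Option.mem_some_iff] at hs
      subst hs
      exact hnr
    · intro s hs
      rw [sw_getLast?] at hs
      simp only [Option.mem_some_iff] at hs
      subst hs
      rw [nr_iff_right, bar_bar]
      have := nr_iff_right.mp hnr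
      simp only [List.head_cons] at this
      intro he
      exact this he.symm

lemma conj_mul (g a b : FreeGroup α) : (g * a) * b * (g * a)⁻¹ = g * (a * b * a⁻¹) * g⁻¹ := by
  group

/- ## structure lemma for conjugates of a generator -/

lemma conj_of_struct (y : α) (h : FreeGroup α) :
    ∃ q, IsRed (SW q [(y, true)]) ∧ h * of y * h⁻¹ = mk (SW q [(y, true)]) := by
  rcases h with ⟨L⟩
  rw [quot_mk_eq_mk]
  induction L with
  | nil =>
    refine ⟨[], ?_, ?_⟩
    · rw [sw_nil]; exact List.isChain_singleton _
    · rw [sw_nil, ← of_eq_mk, ← one_eq_mk]; simp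
  | cons c L ih =>
    obtain ⟨q, hq, he⟩ := ih
    rw [mk_cons, conj_mul, he]
    cases q with
    | nil =>
      rw [sw_nil, ← of_eq_mk]
      by_cases hc : c.1 = y
      · refine ⟨[], ?_, ?_⟩
        · rw [sw_nil]; exact List.isChain_singleton _
        · rw [sw_nil, ← of_eq_mk]
          obtain ⟨a, u⟩ := c
          simp only at hc
          subst hc
          cases u
          · rw [show ((a, false) : α × Bool) = bar (a, true) from rfl, mk_bar, ← of_eq_mk]
            group
          · rw [← of_eq_mk]; group
      · refine ⟨[c], ?_, ?_⟩
        · rw [sw_cons_eq, sw_nil]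
          refine List.isChain_cons_cons.mpr ⟨fun h1 => absurd h1 hc, ?_⟩
          refine List.isChain_cons_cons.mpr ⟨fun h1 => absurd h1.symm hc, List.isChain_singleton _⟩
        · rw [mk_sw, ← of_eq_mk]
    | cons d q0 =>
      rw [mk_sw, ← of_eq_mk]
      by_cases hc : d = bar c
      · refine ⟨q0, ?_, ?_⟩
        · have h3 : SW (d :: q0) [(y, true)] = d :: (SW q0 [(y, true)] ++ [bar d]) :=
            sw_cons_eq _ _ _
          rw [h3] at hq
          exact (List.isChain_append.mp (List.IsChain.tail hq)).1
        · rw [mk_sw, ← of_eq_mk]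
          subst hc
          rw [mk_cons (bar c) q0, mk_bar]
          group
      · refine ⟨c :: d :: q0, ?_, ?_⟩
        · exact isRed_sw_cons c hq (by simp) (by
            simp only [List.head_cons]
            exact nr_iff_right.mpr hc)
        · rw [mk_sw, ← of_eq_mk, mk_cons c (d :: q0)]
          group


lemma mk_pair (u v : α × Bool) : mk [u, v] = mk [u] * mk [v] := by
  rw [mul_mk]; rfl

/- ## structure lemma for conjugates of a 2-letter word -/

lemma conj_pair_struct (s t : α × Bool) (hst : s.1 ≠ t.1) (w : FreeGroup α) :
    ∃ p u v, ((u, v) = (s, t) ∨ (u, v) = (t, s)) ∧ IsRed (SW p [u, v]) ∧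
      w * mk [s, t] * w⁻¹ = mk (SW p [u, v]) := by
  rcases w with ⟨L⟩
  rw [quot_mk_eq_mk]
  induction L with
  | nil =>
    refine ⟨[], s, t, Or.inl rfl, ?_, ?_⟩
    · rw [sw_nil]
      exact List.isChain_cons_cons.mpr ⟨fun h1 => absurd h1 hst, List.isChain_singleton _⟩
    · rw [sw_nil, ← one_eq_mk]; simp
  | cons c L ih =>
    obtain ⟨p, u, v, huv, hq, he⟩ := ih
    have huv1 : u.1 ≠ v.1 := by
      rcases huv with h1 | h1 <;> (injection h1 with e1 e2; subst e1; subst e2)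
      · exact hst
      · exact hst.symm
    have hswap : ((v, u) = (s, t) ∨ (v, u) = (t, s)) := by
      rcases huv with h1 | h1 <;> (injection h1 with e1 e2; subst e1; subst e2)
      · exact Or.inr rfl
      · exact Or.inl rfl
    rw [mk_cons, conj_mul, he]
    cases p with
    | nil =>
      rw [sw_nil]
      by_cases hcu : u = bar c
      · refine ⟨[], v, u, hswap, ?_, ?_⟩
        · rw [sw_nil]
          exact List.isChain_cons_cons.mpr ⟨fun h1 => absurd h1.symm huv1, List.isChain_singleton _⟩
        · rw [sw_nil, mk_pair, mk_pair]
          subst hcu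
          rw [mk_bar]
          group
      · by_cases hcv : c = v
        · refine ⟨[], v, u, hswap, ?_, ?_⟩
          · rw [sw_nil]
            exact List.isChain_cons_cons.mpr ⟨fun h1 => absurd h1.symm huv1, List.isChain_singleton _⟩
          · rw [sw_nil, mk_pair, mk_pair]
            subst hcv
            group
        · refine ⟨[c], u, v, huv, ?_, ?_⟩
          · rw [sw_cons_eq, sw_nil]
            refine List.isChain_cons_cons.mpr ⟨nr_iff_right.mpr hcu, ?_⟩
            refine List.isChain_cons_cons.mpr ⟨fun h1 => absurd h1 huv1, ?_⟩
            refine List.isChain_cons_cons.mpr ⟨?_, List.isChain_singleton _⟩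
            rw [nr_iff_right]
            intro h1
            exact hcv (by rw [← bar_bar c, h1, bar_bar])
          · rw [mk_sw]
    | cons d p0 =>
      by_cases hc : d = bar c
      · refine ⟨p0, u, v, huv, ?_, ?_⟩
        · have h3 : SW (d :: p0) [u, v] = d :: (SW p0 [u, v] ++ [bar d]) := sw_cons_eq _ _ _
          rw [h3] at hq
          exact (List.isChain_append.mp (List.IsChain.tail hq)).1
        · rw [mk_sw, mk_sw]
          subst hc
          rw [mk_cons (bar c) p0, mk_bar]
          group
      · refine ⟨c :: d :: p0, u, v, huv, ?_, ?_⟩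
        · exact isRed_sw_cons c hq (by simp) (by
            simp only [List.head_cons]
            exact nr_iff_right.mpr hc)
        · rw [mk_sw, mk_sw, mk_cons c (d :: p0)]
          group


/- ## rotation lemma -/

lemma rot {β : Type*} : ∀ (l : List β) (u v : β), u :: l = l ++ [v] →
    u = v ∧ l = List.replicate l.length u
  | [], u, v, h => by simp_all
  | w :: l', u, v, h => by
    rw [List.cons_append] at h
    injection h with h1 h2
    subst h1
    obtain ⟨e1, e2⟩ := rot l' u v h2
    refine ⟨e1, ?_⟩
    simp only [List.length_cons, List.replicate_succ]
    rw [← e2]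

/- ## replicate powers -/

lemma mk_replicate_tt (x : α) (n : ℕ) : mk (List.replicate n (x, true)) = of x ^ n := by
  rw [← FreeGroup.toWord_of_pow x n, mk_toWord]

lemma mk_replicate_ff (x : α) (n : ℕ) : mk (List.replicate n (x, false)) = (of x ^ n)⁻¹ := by
  have h1 : List.replicate n ((x, false) : α × Bool) = invRev (List.replicate n (x, true)) := by
    rw [invRev_replicate]
    rfl
  rw [h1, ← inv_mk, mk_replicate_tt]

lemma sw_length (p r : List (α × Bool)) : (SW p r).length = 2 * p.length + r.length := by
  simp [SW, invRev_length]
  omega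

/- ## the key lemma -/

lemma key {x y : α} (hxy : x ≠ y) (h : FreeGroup α)
    (H : IsConj (of x * (h * of y * h⁻¹)) (of x * of y)) :
    ∃ k : ℤ, h * of y * h⁻¹ = of x ^ k * of y * (of x ^ k)⁻¹ := by
  obtain ⟨q, hqred, hqe⟩ := conj_of_struct y h
  obtain ⟨w, hw⟩ : ∃ w, w * (of x * of y) * w⁻¹ = of x * (h * of y * h⁻¹) :=
    isConj_iff.mp (isConj_comm.mp H)
  have hab : of x * of y = mk [(x, true), (y, true)] := by
    rw [mk_pair, ← of_eq_mk, ← of_eq_mk]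
  obtain ⟨p, u, v, huv, hpred, hpe⟩ := conj_pair_struct (x, true) (y, true) (by simpa using hxy) w
  have hz : of x * (h * of y * h⁻¹) = mk (SW p [u, v]) := by
    rw [← hw, hab, hpe]
  cases q with
  | nil =>
    refine ⟨0, ?_⟩
    rw [sw_nil, ← of_eq_mk] at hqe
    simpa using hqe
  | cons e q0 =>
    by_cases hee : e = bar (x, true)
    · -- cancellation case
      subst hee
      have hsw : SW (bar (x, true) :: q0) [(y, true)] =
          bar (x, true) :: (SW q0 [(y, true)] ++ [(x, true)]) := by
        rw [sw_cons_eq, bar_bar]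
      have hNred : IsRed (SW q0 [(y, true)] ++ [(x, true)]) := by
        rw [hsw] at hqred
        exact List.IsChain.tail hqred
      have hzN : of x * (h * of y * h⁻¹) = mk (SW q0 [(y, true)] ++ [(x, true)]) := by
        rw [hqe, hsw, mk_cons, of_eq_mk, ← mul_assoc,
          show mk [((x, true) : α × Bool)] * mk [bar ((x, true) : α × Bool)] = 1 by
            rw [mk_bar]; group]
        rw [one_mul]
      have E0 : SW q0 [(y, true)] ++ [(x, true)] = SW p [u, v] := by
        rw [← toWord_mk_isRed hNred, ← toWord_mk_isRed hpred, hzN.symm.trans hz]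
      have hlen : p.length = q0.length := by
        have h5 := congrArg List.length E0
        simp [sw_length] at h5
        omega
      have E : q0 ++ ((y, true) :: (invRev q0 ++ [(x, true)])) = p ++ (u :: v :: invRev p) := by
        simpa only [SW, List.append_assoc, List.cons_append, List.nil_append,
          List.singleton_append] using E0
      obtain ⟨E1, E2⟩ := List.append_inj E (by omega)
      rw [← E1] at E2
      injection E2 with E3 E4
      -- E3 : (y,true) = u ; E4 : invRev q0 ++ [(x,true)] = v :: invRev q0
      have huv2 : v = (x, true) := by
        rcases huv with h1 | h1 <;> rw [Prod.mk.injEq] at h1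
        · exact absurd (congrArg Prod.fst (E3.trans h1.1)).symm hxy
        · exact h1.2
      rw [huv2] at E4
      obtain ⟨-, E5⟩ := rot (invRev q0) (x, true) (x, true) E4.symm
      have hq0 : q0 = List.replicate q0.length (x, false) := by
        have h6 := congrArg invRev E5
        rw [invRev_invRev, invRev_replicate] at h6
        simpa [invRev_length, bar] using h6
      refine ⟨-(q0.length + 1 : ℕ), ?_⟩
      rw [hqe, mk_sw, ← of_eq_mk,
        show (bar ((x, true) : α × Bool) :: q0) = List.replicate (q0.length + 1) (x, false) by
          rw [List.replicate_succ, ← hq0]; rfl,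
        mk_replicate_ff]
      rw [zpow_neg, zpow_natCast]
    · -- no cancellation case
      have hMred : IsRed ((x, true) :: SW (e :: q0) [(y, true)]) := by
        rw [IsRed, List.isChain_cons]
        refine ⟨?_, hqred⟩
        intro s hs
        rw [sw_head?] at hs
        simp only [Option.mem_some_iff] at hs
        subst hs
        rw [nr_iff_right]
        exact fun h1 => hee h1
      have hzM : of x * (h * of y * h⁻¹) = mk ((x, true) :: SW (e :: q0) [(y, true)]) := by
        rw [hqe, mk_cons, ← of_eq_mk]
      have E : (x, true) :: SW (e :: q0) [(y, true)] = SW p [u, v] := by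
        rw [← toWord_mk_isRed hMred, ← toWord_mk_isRed hpred, hzM.symm.trans hz]
      have hlen : p.length = q0.length + 1 := by
        have h5 := congrArg List.length E
        simp [sw_length] at h5
        omega
      have E' : ((x, true) :: (e :: q0)) ++ ((y, true) :: invRev (e :: q0)) =
          (p ++ [u]) ++ (v :: invRev p) := by
        simpa only [SW, List.append_assoc, List.cons_append, List.nil_append,
          List.singleton_append] using E
      obtain ⟨E1, E2⟩ := List.append_inj E' (by simp [hlen])
      injection E2 with E3 E4
      -- E3 : (y,true) = v ; E4 : invRev (e::q0) = invRev p
      have huv2 : u = (x, true) := by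
        rcases huv with h1 | h1 <;> rw [Prod.mk.injEq] at h1
        · exact h1.1
        · exact absurd (congrArg Prod.fst (E3.trans h1.2)).symm hxy
      have hqp : e :: q0 = p := invRev_injective E4
      rw [huv2, ← hqp] at E1
      obtain ⟨-, E5⟩ := rot (e :: q0) (x, true) (x, true) E1
      refine ⟨(q0.length + 1 : ℕ), ?_⟩
      rw [hqe, mk_sw, ← of_eq_mk,
        show (e :: q0) = List.replicate (q0.length + 1) ((x, true) : α × Bool) by
          simpa using E5,
        mk_replicate_tt, zpow_natCast]


/- ## powers of a generator conjugating another generator -/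

lemma isRed_sw_rep {x y : α} (hxy : x ≠ y) (n : ℕ) :
    IsRed (SW (List.replicate n (x, true)) [(y, true)]) := by
  induction n with
  | zero => rw [List.replicate_zero, sw_nil]; exact List.isChain_singleton _
  | succ m ih =>
    rw [List.replicate_succ, sw_cons_eq]
    refine isRed_wrap ih ?_ ?_ ?_
    · intro hcon
      have h1 := congrArg List.length hcon
      rw [sw_length] at h1
      simp at h1
    · intro s hs
      cases m with
      | zero =>
        rw [List.replicate_zero, sw_nil] at hs
        simp only [List.head?_cons, Option.mem_some_iff] at hs
        subst hs
        exact fun h1 => absurd h1 hxy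
      | succ m' =>
        rw [List.replicate_succ, sw_head?] at hs
        simp only [Option.mem_some_iff] at hs
        subst hs
        exact fun _ => rfl
    · intro s hs
      cases m with
      | zero =>
        rw [List.replicate_zero, sw_nil] at hs
        simp only [List.getLast?_singleton, Option.mem_some_iff] at hs
        subst hs
        exact fun h1 => absurd h1 (Ne.symm hxy)
      | succ m' =>
        rw [List.replicate_succ, sw_getLast?] at hs
        simp only [Option.mem_some_iff] at hs
        subst hs
        exact fun _ => rfl

lemma pow_conj_nat {x y : α} (hxy : x ≠ y) {n : ℕ}
    (H : of x ^ n * of y * (of x ^ n)⁻¹ = of y) : n = 0 := by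
  have hred := isRed_sw_rep hxy n
  have hmk : of x ^ n * of y * (of x ^ n)⁻¹ = mk (SW (List.replicate n (x, true)) [(y, true)]) := by
    rw [mk_sw, mk_replicate_tt, ← of_eq_mk]
  have h2 : SW (List.replicate n (x, true)) [(y, true)] = (of y).toWord := by
    rw [← toWord_mk_isRed hred, ← hmk, H]
  have h3 := congrArg List.length h2
  rw [sw_length, toWord_of] at h3
  simp at h3
  omega

lemma pow_conj_int {x y : α} (hxy : x ≠ y) {d : ℤ}
    (H : of x ^ d * of y * (of x ^ d)⁻¹ = of y) : d = 0 := by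
  rcases Int.natAbs_eq d with he | he
  · rw [he, zpow_natCast] at H
    rw [he, pow_conj_nat hxy H]
    rfl
  · rw [he, zpow_neg, zpow_natCast, inv_inv] at H
    have h5 := congrArg (fun z => of x ^ d.natAbs * z * (of x ^ d.natAbs)⁻¹) H
    have H2 : of x ^ d.natAbs * of y * (of x ^ d.natAbs)⁻¹ = of y := by
      rw [← h5]; group
    have h6 := pow_conj_nat hxy H2
    omega

end FGInner

/-- If an automorphism of a finitely generated free group (with free basis `α`, of rank at
least 2) sends every element of word length at most 2 over the basis to a conjugate of
itself, then it is an inner automorphism. -/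
theorem inner_of_conj_on_short_words (α : Type*) [Fintype α] [DecidableEq α]
    (hN : 2 ≤ Fintype.card α) (Φ : MulAut (FreeGroup α))
    (hconj : ∀ u : FreeGroup α, (FreeGroup.toWord u).length ≤ 2 → IsConj (Φ u) u) :
    ∃ h : FreeGroup α, ∀ x : FreeGroup α, Φ x = h * x * h⁻¹ := by
  classical
  have hne : Nonempty α := Fintype.card_pos_iff.mp (by omega)
  obtain ⟨x₀⟩ := hne
  have len_of : ∀ i : α, ((FreeGroup.of i).toWord).length ≤ 2 := by
    intro i; rw [FreeGroup.toWord_of]; simp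
  have len_pair : ∀ i j : α, i ≠ j →
      ((FreeGroup.of i * FreeGroup.of j).toWord).length ≤ 2 := by
    intro i j hij
    have h1 : FreeGroup.of i * FreeGroup.of j = FreeGroup.mk [(i, true), (j, true)] := by
      rw [FGInner.mk_pair, ← FGInner.of_eq_mk, ← FGInner.of_eq_mk]
    rw [h1, FGInner.toWord_mk_isRed]
    · simp
    · exact List.isChain_cons_cons.mpr ⟨fun h2 => absurd h2 hij, List.isChain_singleton _⟩
  obtain ⟨g, hg⟩ := isConj_iff.mp (hconj (FreeGroup.of x₀) (len_of x₀)).symm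
  have hgx : g⁻¹ * Φ (FreeGroup.of x₀) * g = FreeGroup.of x₀ := by rw [← hg]; group
  have hpsi_conj : ∀ z : FreeGroup α, (FreeGroup.toWord z).length ≤ 2 →
      IsConj (g⁻¹ * Φ z * g) z := by
    intro z hz
    exact (isConj_iff.mpr ⟨g, by group⟩ : IsConj (g⁻¹ * Φ z * g) (Φ z)).trans (hconj z hz)
  have keyA : ∀ i j : α, i ≠ j → (g⁻¹ * Φ (FreeGroup.of i) * g = FreeGroup.of i) →
      ∃ k : ℤ, g⁻¹ * Φ (FreeGroup.of j) * g =
        FreeGroup.of i ^ k * FreeGroup.of j * (FreeGroup.of i ^ k)⁻¹ := by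
    intro i j hij hgi
    obtain ⟨w, hw⟩ := isConj_iff.mp (hconj (FreeGroup.of j) (len_of j)).symm
    have hpsij : g⁻¹ * Φ (FreeGroup.of j) * g =
        (g⁻¹ * w) * FreeGroup.of j * (g⁻¹ * w)⁻¹ := by rw [← hw]; group
    have hmul : FreeGroup.of i * ((g⁻¹ * w) * FreeGroup.of j * (g⁻¹ * w)⁻¹) =
        g⁻¹ * Φ (FreeGroup.of i * FreeGroup.of j) * g := by
      calc FreeGroup.of i * ((g⁻¹ * w) * FreeGroup.of j * (g⁻¹ * w)⁻¹)
          = (g⁻¹ * Φ (FreeGroup.of i) * g) * (g⁻¹ * Φ (FreeGroup.of j) * g) := by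
            rw [hgi, ← hpsij]
        _ = g⁻¹ * (Φ (FreeGroup.of i) * Φ (FreeGroup.of j)) * g := by group
        _ = g⁻¹ * Φ (FreeGroup.of i * FreeGroup.of j) * g := by rw [map_mul]
    have H : IsConj (FreeGroup.of i * ((g⁻¹ * w) * FreeGroup.of j * (g⁻¹ * w)⁻¹))
        (FreeGroup.of i * FreeGroup.of j) := by
      rw [hmul]; exact hpsi_conj _ (len_pair i j hij)
    obtain ⟨k, hk⟩ := FGInner.key hij (g⁻¹ * w) H
    exact ⟨k, by rw [hpsij, hk]⟩
  have hkey : ∀ i : α, i ≠ x₀ → ∃ k : ℤ, g⁻¹ * Φ (FreeGroup.of i) * g =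
      FreeGroup.of x₀ ^ k * FreeGroup.of i * (FreeGroup.of x₀ ^ k)⁻¹ :=
    fun i hi => keyA x₀ i (Ne.symm hi) hgx
  choose! k hk using hkey
  have hsame : ∀ i j : α, i ≠ x₀ → j ≠ x₀ → i ≠ j → k i = k j := by
    intro i j hi hj hij
    have hki := hk i hi
    have hkj := hk j hj
    have Hexp : g⁻¹ * Φ (FreeGroup.of i * FreeGroup.of j) * g =
        (FreeGroup.of x₀ ^ k i * FreeGroup.of i * (FreeGroup.of x₀ ^ k i)⁻¹) *
        (FreeGroup.of x₀ ^ k j * FreeGroup.of j * (FreeGroup.of x₀ ^ k j)⁻¹) := by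
      rw [map_mul, ← hki, ← hkj]; group
    have H1 : IsConj (FreeGroup.of i * ((FreeGroup.of x₀ ^ (k j - k i)) * FreeGroup.of j *
        (FreeGroup.of x₀ ^ (k j - k i))⁻¹)) (FreeGroup.of i * FreeGroup.of j) := by
      have heq : FreeGroup.of i * ((FreeGroup.of x₀ ^ (k j - k i)) * FreeGroup.of j *
          (FreeGroup.of x₀ ^ (k j - k i))⁻¹) =
          (FreeGroup.of x₀ ^ k i)⁻¹ * (g⁻¹ * Φ (FreeGroup.of i * FreeGroup.of j) * g) *
          (FreeGroup.of x₀ ^ k i) := by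
        rw [Hexp]; group
      rw [heq]
      exact (isConj_iff.mpr ⟨FreeGroup.of x₀ ^ k i, by group⟩).trans
        (hpsi_conj _ (len_pair i j hij))
    obtain ⟨m, hm⟩ := FGInner.key hij (FreeGroup.of x₀ ^ (k j - k i)) H1
    set π := FreeGroup.lift (fun z : α => if z = i then (1 : FreeGroup α) else FreeGroup.of z)
      with hπ
    have hπi : π (FreeGroup.of i) = 1 := by rw [hπ, FreeGroup.lift_apply_of, if_pos rfl]
    have hπj : π (FreeGroup.of j) = FreeGroup.of j := by
      rw [hπ, FreeGroup.lift_apply_of, if_neg (Ne.symm hij)]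
    have hπc : π (FreeGroup.of x₀) = FreeGroup.of x₀ := by
      rw [hπ, FreeGroup.lift_apply_of, if_neg (fun hh => hi hh.symm)]
    have h7 := congrArg (fun z => π z) hm
    simp only [map_mul, map_zpow, map_inv, hπi, hπj, hπc, one_zpow, one_mul, inv_one,
      mul_one] at h7
    have hd := FGInner.pow_conj_int (fun hh => hj hh.symm : x₀ ≠ j) h7
    omega
  obtain ⟨i₁, hi₁⟩ := Fintype.exists_ne_of_one_lt_card (by omega) x₀
  have hall : ∀ i : α, i ≠ x₀ → g⁻¹ * Φ (FreeGroup.of i) * g =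
      FreeGroup.of x₀ ^ k i₁ * FreeGroup.of i * (FreeGroup.of x₀ ^ k i₁)⁻¹ := by
    intro i hi
    by_cases hii : i = i₁
    · subst hii; exact hk _ hi
    · rw [hk i hi, hsame i i₁ hi hi₁ hii]
  refine ⟨g * FreeGroup.of x₀ ^ k i₁, ?_⟩
  have hgen : ∀ i : α, Φ (FreeGroup.of i) =
      (g * FreeGroup.of x₀ ^ k i₁) * FreeGroup.of i * (g * FreeGroup.of x₀ ^ k i₁)⁻¹ := by
    intro i
    by_cases hi : i = x₀
    · subst hi
      rw [← hg]; group
    · have h8 := hall i hi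
      calc Φ (FreeGroup.of i) = g * (g⁻¹ * Φ (FreeGroup.of i) * g) * g⁻¹ := by group
        _ = g * (FreeGroup.of x₀ ^ k i₁ * FreeGroup.of i * (FreeGroup.of x₀ ^ k i₁)⁻¹) *
            g⁻¹ := by rw [h8]
        _ = _ := by group
  intro z
  have hhom : (Φ : FreeGroup α ≃* FreeGroup α).toMonoidHom =
      (MulAut.conj (g * FreeGroup.of x₀ ^ k i₁) : FreeGroup α ≃* FreeGroup α).toMonoidHom := by
    apply FreeGroup.ext_hom
    intro a
    simp only [MulEquiv.coe_toMonoidHom, MulAut.conj_apply]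
    exact hgen a
  have h10 := DFunLike.congr_fun hhom z
  simp only [MulEquiv.coe_toMonoidHom, MulAut.conj_apply] at h10
  exact h10
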